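/- Let A' be a commutative ring, J' ⊆ A' an ideal, B' := A'/J' with quotient map g : A' → B', let f : B → B' be a homomorphism of commutative rings, and let A := B ×_{B'} A' be the fiber product ring. If B' is finitely generated as a B-module via f (i.e., f is a finite ring homomorphism), then A' is finitely generated as an A-module via the second projection pr₂ : A → A'. -/

import Mathlib

/-- The fiber product ring `B ×_{B'} A'` of two ring homomorphisms `f : B →+* B'` and
`g : A' →+* B'`, realized as the subring `{(b, a') | f b = g a'}` of `B × A'`. -/
def fiberProd {B A' B' : Type*} [CommRing B] [CommRing A'] [CommRing B']
    (f : B →+* B') (g : A' →+* B') : Subring (B × A') :=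
  RingHom.eqLocus (f.comp (RingHom.fst B A')) (g.comp (RingHom.snd B A'))

/-- The second projection `pr₂ : B ×_{B'} A' →+* A'`. -/
def fiberProdSnd {B A' B' : Type*} [CommRing B] [CommRing A'] [CommRing B']
    (f : B →+* B') (g : A' →+* B') : fiberProd f g →+* A' :=
  (RingHom.snd B A').comp (fiberProd f g).subtype

theorem stmt1 {B A' : Type*} [CommRing B] [CommRing A'] (J' : Ideal A')
    (f : B →+* A' ⧸ J') (hf : f.Finite) :
    (fiberProdSnd f (Ideal.Quotient.mk J')).Finite := by
  classical
  letI : Algebra B (A' ⧸ J') := f.toAlgebra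
  letI : Algebra (fiberProd f (Ideal.Quotient.mk J')) A' :=
    (fiberProdSnd f (Ideal.Quotient.mk J')).toAlgebra
  have hsmul : ∀ (a : fiberProd f (Ideal.Quotient.mk J')) (x : A'),
      a • x = (a : B × A').2 * x := fun a x => by
    rw [Algebra.smul_def, RingHom.algebraMap_toAlgebra]; rfl
  have hsmul' : ∀ (b : B) (x : A' ⧸ J'), b • x = f b * x := fun b x => by
    rw [Algebra.smul_def, RingHom.algebraMap_toAlgebra]
  obtain ⟨s, hs⟩ := hf.1
  choose lift hlift using Ideal.Quotient.mk_surjective (I := J')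
  constructor
  refine ⟨insert 1 (s.image lift), ?_⟩
  rw [eq_top_iff]
  rintro a' -
  have h1 : (Ideal.Quotient.mk J') a' ∈ Submodule.span B (s : Set (A' ⧸ J')) := by
    rw [hs]; trivial
  rw [Submodule.mem_span_finset] at h1
  obtain ⟨c, -, hc⟩ := h1
  -- elements of the fiber product lifting the coefficients
  have hE : ∀ i : A' ⧸ J', ((c i, lift (f (c i))) : B × A') ∈
      fiberProd f (Ideal.Quotient.mk J') := fun i => (hlift (f (c i))).symm
  set E : (A' ⧸ J') → fiberProd f (Ideal.Quotient.mk J') :=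
    fun i => ⟨(c i, lift (f (c i))), hE i⟩ with hEdef
  have hj : a' - ∑ i ∈ s, (E i : B × A').2 * lift i ∈ J' := by
    rw [← Ideal.Quotient.eq_zero_iff_mem]
    simp only [map_sub, map_sum, map_mul]
    have : ∀ i ∈ s, (Ideal.Quotient.mk J') (E i : B × A').2 *
        (Ideal.Quotient.mk J') (lift i) = c i • i := by
      intro i _
      rw [hsmul', hEdef]
      simp [hlift]
    rw [Finset.sum_congr rfl this, hc, sub_self]
  have hZ : ((0, a' - ∑ i ∈ s, (E i : B × A').2 * lift i) : B × A') ∈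
      fiberProd f (Ideal.Quotient.mk J') := by
    show f 0 = Ideal.Quotient.mk J' _
    simp only [map_zero, RingHom.coe_snd]
    exact (Ideal.Quotient.eq_zero_iff_mem.mpr hj).symm
  set Z : fiberProd f (Ideal.Quotient.mk J') := ⟨_, hZ⟩ with hZdef
  have key : a' = (∑ i ∈ s, E i • lift i) + Z • (1 : A') := by
    simp only [hsmul, hZdef, mul_one]
    ring
  rw [key]
  refine Submodule.add_mem _ (Submodule.sum_mem _ fun i hi => ?_) ?_
  · exact Submodule.smul_mem _ _ (Submodule.subset_span (by
      simp only [Finset.coe_insert, Set.mem_insert_iff, Finset.coe_image]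
      exact Or.inr ⟨i, hi, rfl⟩))
  · exact Submodule.smul_mem _ _ (Submodule.subset_span (by simp))
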